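/- For every w ∈ R^{N+1} encoding a Knapsack constraint and Δ = 1, the equivalent vector w̄ from the coefficient-reduction theorem satisfies ‖w̄‖_∞ ≤ ‖w̄‖_1 ≤ (N+1)^2·(2√(N+1))^N, and hence its binary encoding length is O(N log N). Consequently, a Knapsack instance with n items admits an equivalent instance (same solution set of item subsets) of total encoding size O(n^2 log n). -/

import Mathlib

open Module

namespace KnapsackAux

noncomputable section
open Classical Matrix

variable (n : ℕ) (w : Fin n → ℝ) (C : ℝ)

def a (s : Finset (Fin n)) : Fin (n+1) → ℤ :=
  if (∑ i ∈ s, w i ≤ C) then Fin.snoc (fun i => if i ∈ s then -1 else 0) 1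
  else Fin.snoc (fun i => if i ∈ s then 1 else 0) (-1)

def b (s : Finset (Fin n)) : ℤ := if (∑ i ∈ s, w i ≤ C) then 0 else 1

def A (s : Finset (Fin n)) : Fin (n+1) → ℝ := fun j => (a n w C s j : ℝ)

def dot (v x : Fin (n+1) → ℝ) : ℝ := ∑ j, v j * x j

def Q : Set (Fin (n+1) → ℝ) := {x | ∀ s, (b n w C s : ℝ) ≤ dot n (A n w C s) x}

variable {n w C}

lemma b_nonneg (s : Finset (Fin n)) : (0:ℝ) ≤ b n w C s := by
  unfold b; split <;> norm_num

lemma abs_b_le_one (s : Finset (Fin n)) : |(b n w C s : ℝ)| ≤ 1 := by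
  unfold b; split <;> norm_num

lemma abs_A_le (s : Finset (Fin n)) (j : Fin (n+1)) : |A n w C s j| ≤ 1 := by
  unfold A a
  split <;> refine Fin.lastCases ?_ (fun i => ?_) j <;>
    simp [Fin.snoc_last, Fin.snoc_castSucc] <;> split <;> norm_num

lemma dot_A (s : Finset (Fin n)) (x : Fin (n+1) → ℝ) :
    dot n (A n w C s) x
      = (if (∑ i ∈ s, w i ≤ C) then (-1:ℝ) else 1) * ((∑ i ∈ s, x i.castSucc) - x (Fin.last n)) := by
  unfold dot A a
  split_ifs with hs <;>
    · rw [Fin.sum_univ_castSucc]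
      simp only [Fin.snoc_last, Fin.snoc_castSucc, apply_ite (fun z : ℤ => (z:ℝ)),
        Int.cast_neg, Int.cast_one, Int.cast_zero, ite_mul, zero_mul]
      rw [Finset.sum_ite_mem, Finset.univ_inter]
      rw [show ∀ S : Finset (Fin n), ∀ c : ℝ, ∑ i ∈ S, c * x i.castSucc = c * ∑ i ∈ S, x i.castSucc
        from fun S c => by rw [Finset.mul_sum]]
      ring

lemma dot_add (v x y : Fin (n+1) → ℝ) : dot n v (x + y) = dot n v x + dot n v y := by
  unfold dot; rw [← Finset.sum_add_distrib]; exact Finset.sum_congr rfl fun j _ => by simp [mul_add]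

lemma dot_sub (v x y : Fin (n+1) → ℝ) : dot n v (x - y) = dot n v x - dot n v y := by
  unfold dot; rw [← Finset.sum_sub_distrib]; exact Finset.sum_congr rfl fun j _ => by simp [mul_sub]

lemma dot_smul (v x : Fin (n+1) → ℝ) (t : ℝ) : dot n v (t • x) = t * dot n v x := by
  unfold dot; rw [Finset.mul_sum]; exact Finset.sum_congr rfl fun j _ => by simp; ring

def L (x : Fin (n+1) → ℝ) : (Fin (n+1) → ℝ) →ₗ[ℝ] ℝ := ∑ j, x j • LinearMap.proj j

lemma L_apply (x v : Fin (n+1) → ℝ) : L x v = dot n v x := by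
  unfold L dot
  rw [LinearMap.sum_apply]
  exact Finset.sum_congr rfl fun j _ => by simp [mul_comm]

lemma smul_mem_Q {x : Fin (n+1) → ℝ} (hx : x ∈ Q n w C) {t : ℝ} (ht : 1 ≤ t) :
    t • x ∈ Q n w C := by
  intro s
  have h1 := hx s
  have h2 := b_nonneg (w := w) (C := C) s
  rw [dot_smul]
  nlinarith

lemma Q_nonempty : (Q n w C).Nonempty := by
  by_cases h : ∃ s : Finset (Fin n), ¬ (∑ i ∈ s, w i ≤ C)
  · set F := Finset.univ.filter (fun s : Finset (Fin n) => ¬ (∑ i ∈ s, w i ≤ C)) with hF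
    have hFne : F.Nonempty := by
      obtain ⟨s, hs⟩ := h
      exact ⟨s, Finset.mem_filter.mpr ⟨Finset.mem_univ s, hs⟩⟩
    set δ := F.inf' hFne (fun s => (∑ i ∈ s, w i) - C) with hδ
    have hδpos : 0 < δ := by
      rw [hδ, Finset.lt_inf'_iff]
      intro s hs
      simp only [hF, Finset.mem_filter] at hs
      have := not_le.mp hs.2
      linarith
    refine ⟨Fin.snoc (fun i => w i / δ) (C / δ), ?_⟩
    intro s
    rw [dot_A]
    simp only [Fin.snoc_last, Fin.snoc_castSucc]
    rw [← Finset.sum_div]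
    by_cases hs : (∑ i ∈ s, w i ≤ C)
    · rw [if_pos hs]; unfold b; rw [if_pos hs]
      rw [div_sub_div_same]
      push_cast
      rw [neg_one_mul, ← neg_div, neg_sub]
      exact div_nonneg (by linarith) hδpos.le
    · rw [if_neg hs]; unfold b; rw [if_neg hs]
      have hmem : s ∈ F := Finset.mem_filter.mpr ⟨Finset.mem_univ s, hs⟩
      have hle : δ ≤ (∑ i ∈ s, w i) - C := Finset.inf'_le _ hmem
      push_cast
      rw [div_sub_div_same]
      rw [one_mul, le_div_iff₀ hδpos]
      linarith
  · refine ⟨Fin.snoc (fun i => w i) C, ?_⟩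
    intro s
    push_neg at h
    rw [dot_A, if_pos (h s)]
    unfold b; rw [if_pos (h s)]
    simp only [Fin.snoc_last, Fin.snoc_castSucc]
    push_cast
    nlinarith [h s]

lemma exists_maximal_point :
    ∃ x₀ ∈ Q n w C, ∀ x ∈ Q n w C,
      finrank ℝ (Submodule.span ℝ (A n w C '' {s | dot n (A n w C s) x = b n w C s}))
        ≤ finrank ℝ (Submodule.span ℝ (A n w C '' {s | dot n (A n w C s) x₀ = b n w C s})) := by
  set rk : (Fin (n+1) → ℝ) → ℕ := fun x =>
    finrank ℝ (Submodule.span ℝ (A n w C '' {s | dot n (A n w C s) x = b n w C s})) with hrk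
  set V : Set ℕ := rk '' (Q n w C) with hV
  have hVne : V.Nonempty := Q_nonempty.image rk
  have hVbdd : BddAbove V := by
    refine ⟨n+1, ?_⟩
    rintro k ⟨x, hx, rfl⟩
    calc rk x ≤ finrank ℝ (Fin (n+1) → ℝ) := Submodule.finrank_le _
      _ = n+1 := by simp [Module.finrank_pi]
  obtain ⟨x₀, hx₀Q, hx₀⟩ := Nat.sSup_mem hVne hVbdd
  refine ⟨x₀, hx₀Q, fun x hx => ?_⟩
  have h := le_csSup hVbdd (Set.mem_image_of_mem rk hx)
  rw [← hx₀] at h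
  exact h

lemma keyB {x₀ : Fin (n+1) → ℝ} (hx₀Q : x₀ ∈ Q n w C)
    (hx₀max : ∀ x ∈ Q n w C,
      finrank ℝ (Submodule.span ℝ (A n w C '' {s | dot n (A n w C s) x = b n w C s}))
        ≤ finrank ℝ (Submodule.span ℝ (A n w C '' {s | dot n (A n w C s) x₀ = b n w C s})))
    (x₁ : Fin (n+1) → ℝ)
    (h₁ : ∀ s, dot n (A n w C s) x₀ = b n w C s → dot n (A n w C s) x₁ = b n w C s) :
    x₁ ∈ Q n w C := by
  set T : Set (Finset (Fin n)) := {s | dot n (A n w C s) x₀ = b n w C s} with hT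
  by_contra hx₁
  obtain ⟨s', hs'⟩ : ∃ s, dot n (A n w C s) x₁ < b n w C s := by
    simp only [Q, Set.mem_setOf_eq, not_forall, not_le] at hx₁
    exact hx₁
  set d := x₁ - x₀ with hd
  have hdot_d : ∀ s, dot n (A n w C s) d = dot n (A n w C s) x₁ - dot n (A n w C s) x₀ :=
    fun s => dot_sub _ _ _
  have hd0 : ∀ s ∈ T, dot n (A n w C s) d = 0 := by
    intro s hs
    rw [hdot_d, h₁ s hs, hs]
    ring
  set Viol := Finset.univ.filter (fun s : Finset (Fin n) => dot n (A n w C s) x₁ < b n w C s)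
    with hViol
  have hs'V : s' ∈ Viol := Finset.mem_filter.mpr ⟨Finset.mem_univ _, hs'⟩
  have hVne : Viol.Nonempty := ⟨s', hs'V⟩
  have hdneg : ∀ s ∈ Viol, dot n (A n w C s) d < 0 := by
    intro s hs
    have h2 := (Finset.mem_filter.mp hs).2
    have h3 := hx₀Q s
    rw [hdot_d]; linarith
  have hslack : ∀ s ∈ Viol, 0 < dot n (A n w C s) x₀ - b n w C s := by
    intro s hs
    have h2 := (Finset.mem_filter.mp hs).2
    have h3 := hx₀Q s
    rcases lt_or_eq_of_le h3 with h4 | h4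
    · linarith
    · exfalso
      have : s ∈ T := h4.symm
      have := h₁ s this
      linarith
  set tf : Finset (Fin n) → ℝ := fun s => (dot n (A n w C s) x₀ - b n w C s) / (-(dot n (A n w C s) d)) with htf
  set t := Viol.inf' hVne tf with ht
  have htpos : 0 < t := by
    rw [ht, Finset.lt_inf'_iff]
    intro s hs
    exact div_pos (hslack s hs) (by linarith [hdneg s hs])
  have htle : ∀ s ∈ Viol, t ≤ tf s := fun s hs => Finset.inf'_le _ hs
  have htlt1 : t < 1 := by
    have h5 : tf s' < 1 := by
      rw [htf]
      rw [div_lt_one (by linarith [hdneg s' hs'V])]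
      have := hdot_d s'
      linarith [hs']
    exact lt_of_le_of_lt (htle s' hs'V) h5
  set xt := x₀ + t • d with hxt
  have hdot_xt : ∀ s, dot n (A n w C s) xt = dot n (A n w C s) x₀ + t * dot n (A n w C s) d := by
    intro s; rw [hxt, dot_add, dot_smul]
  have hxtQ : xt ∈ Q n w C := by
    intro s
    rw [hdot_xt]
    by_cases hv : s ∈ Viol
    · have h6 := htle s hv
      have h7 := hdneg s hv
      have hdd : dot n (A n w C s) d ≠ 0 := ne_of_lt h7
      have h8 : tf s * dot n (A n w C s) d = -(dot n (A n w C s) x₀ - b n w C s) := by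
        rw [htf]
        dsimp only
        rw [div_mul_eq_mul_div, mul_div_assoc, div_neg, div_self hdd]
        ring
      nlinarith
    · have h9 : b n w C s ≤ dot n (A n w C s) x₁ := by
        by_contra h10
        exact hv (Finset.mem_filter.mpr ⟨Finset.mem_univ _, not_le.mp h10⟩)
      have h10 := hx₀Q s
      have h11 := hdot_d s
      nlinarith
  obtain ⟨s₁, hs₁V, hs₁min⟩ := Finset.exists_mem_eq_inf' hVne tf
  have hs₁tight : dot n (A n w C s₁) xt = b n w C s₁ := by
    rw [hdot_xt]
    have h12 : t = tf s₁ := hs₁min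
    have h13 := hdneg s₁ hs₁V
    have hdd : dot n (A n w C s₁) d ≠ 0 := ne_of_lt h13
    rw [h12, htf]
    dsimp only
    rw [div_mul_eq_mul_div, mul_div_assoc, div_neg, div_self hdd]
    ring
  have hker : Submodule.span ℝ (A n w C '' T) ≤ LinearMap.ker (L d) := by
    rw [Submodule.span_le]
    rintro v ⟨s, hsT, rfl⟩
    simp only [SetLike.mem_coe, LinearMap.mem_ker]
    rw [L_apply]
    exact hd0 s hsT
  have hnotmem : A n w C s₁ ∉ Submodule.span ℝ (A n w C '' T) := by
    intro hmem
    have h14 : L d (A n w C s₁) = 0 := hker hmem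
    rw [L_apply] at h14
    linarith [hdneg s₁ hs₁V]
  have hTsub : A n w C '' T ⊆ A n w C '' {s | dot n (A n w C s) xt = b n w C s} := by
    apply Set.image_mono
    intro s hs
    show dot n (A n w C s) xt = b n w C s
    rw [hdot_xt, hd0 s hs, hs]; ring
  have hlt : Submodule.span ℝ (A n w C '' T)
      < Submodule.span ℝ (A n w C '' {s | dot n (A n w C s) xt = b n w C s}) := by
    refine lt_of_le_of_ne (Submodule.span_mono hTsub) ?_
    intro heq
    apply hnotmem
    rw [heq]
    exact Submodule.subset_span ⟨s₁, hs₁tight, rfl⟩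
  have hfin := Submodule.finrank_lt_finrank_of_lt hlt
  have := hx₀max xt hxtQ
  omega

lemma hadamard_det {N : ℕ} (M : Matrix (Fin N) (Fin N) ℝ) (h : ∀ i j, |M i j| ≤ 1) :
    |M.det| ≤ Real.sqrt N ^ N := by
  rcases Nat.eq_zero_or_pos N with hN | hN
  · subst hN; simp [Matrix.det_fin_zero]
  haveI : Fact (finrank ℝ (EuclideanSpace ℝ (Fin N)) = N) := ⟨finrank_euclideanSpace_fin⟩
  set b : OrthonormalBasis (Fin N) ℝ (EuclideanSpace ℝ (Fin N)) := EuclideanSpace.basisFun (Fin N) ℝ with hbdef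
  set o : Orientation ℝ (EuclideanSpace ℝ (Fin N)) (Fin N) := b.toBasis.orientation
  set v : Fin N → EuclideanSpace ℝ (Fin N) := fun i => (WithLp.equiv 2 _).symm (M i) with hvdef
  have h1 : |o.volumeForm v| = |b.toBasis.det v| := o.volumeForm_robust' b v
  have h2 : |o.volumeForm v| ≤ ∏ i : Fin N, ‖v i‖ := o.abs_volumeForm_apply_le v
  have h3 : b.toBasis.det v = M.det := by
    rw [Basis.det_apply]
    rw [show (b.toBasis.toMatrix v) = M.transpose by
      ext i j
      rw [Basis.toMatrix_apply]
      rfl]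
    exact Matrix.det_transpose M
  have h4 : ∀ i, ‖v i‖ ≤ Real.sqrt N := by
    intro i
    rw [EuclideanSpace.norm_eq]
    apply Real.sqrt_le_sqrt
    calc ∑ j, ‖v i j‖ ^ 2 ≤ ∑ _j : Fin N, 1 := by
          apply Finset.sum_le_sum
          intro j _
          have h1 : ‖v i j‖ ≤ 1 := by
            simpa [Real.norm_eq_abs, hvdef] using h i j
          nlinarith [norm_nonneg (v i j)]
      _ = (N : ℝ) := by simp
  calc |M.det| = |o.volumeForm v| := by rw [h1, h3]
    _ ≤ ∏ i : Fin N, ‖v i‖ := h2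
    _ ≤ ∏ _i : Fin N, Real.sqrt N :=
        Finset.prod_le_prod (fun i _ => norm_nonneg _) (fun i _ => h4 i)
    _ = Real.sqrt N ^ N := by simp

lemma exists_int_point :
    ∃ y : Fin (n+1) → ℤ, (fun j => (y j : ℝ)) ∈ Q n w C ∧
      ∀ j, |(y j : ℝ)| ≤ ((n:ℝ)+1) * Real.sqrt ((n:ℝ)+1) ^ (n+1) := by
  obtain ⟨x₀, hx₀Q, hx₀max⟩ := exists_maximal_point (n := n) (w := w) (C := C)
  set T : Set (Finset (Fin n)) := {s | dot n (A n w C s) x₀ = b n w C s} with hT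
  obtain ⟨B, hBsub, hBspan, hBli⟩ := exists_linearIndependent ℝ (A n w C '' T)
  replace hBli : LinearIndepOn ℝ id B := hBli
  set U : Set (Fin (n+1) → ℝ) :=
    (A n w C '' T) ∪ Set.range (fun j : Fin (n+1) => (Pi.single j 1 : Fin (n+1) → ℝ)) with hU
  have hBU : B ⊆ U := hBsub.trans Set.subset_union_left
  have hUspan : ⊤ ≤ Submodule.span ℝ U := by
    rw [← (Pi.basisFun ℝ (Fin (n+1))).span_eq]
    apply Submodule.span_mono
    rintro v ⟨j, rfl⟩
    refine Or.inr ⟨j, ?_⟩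
    simp [Pi.basisFun_apply]
  set bas := Basis.extendLe hBli hBU hUspan with hbas
  haveI : Fintype ↥(hBli.extend hBU) := (LinearIndependent.setFinite (hBli.linearIndepOn_extend hBU)).fintype
  have hcard : Fintype.card ↥(hBli.extend hBU) = n+1 := by
    rw [← Module.finrank_eq_card_basis bas]
    simp [Module.finrank_pi]
  set e := Fintype.equivFinOfCardEq hcard with he
  set rows : Fin (n+1) → (Fin (n+1) → ℝ) :=
    fun i => ((e.symm i : ↥(hBli.extend hBU)) : Fin (n+1) → ℝ) with hrows
  have hrows_eq : ∀ i, (bas.reindex e) i = rows i := by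
    intro i
    rw [Basis.reindex_apply, hbas, Basis.extendLe_apply_self]
  have hrowsU : ∀ i, rows i ∈ U := fun i => hBli.extend_subset hBU (e.symm i).2
  have hrowsB : ∀ v ∈ B, ∃ i, rows i = v := by
    intro v hv
    have hvext : v ∈ hBli.extend hBU := hBli.subset_extend hBU hv
    refine ⟨e ⟨v, hvext⟩, ?_⟩
    rw [hrows]
    simp
  have hUentry : ∀ v ∈ U, ∀ j, (∃ z : ℤ, v j = (z:ℝ)) ∧ |v j| ≤ 1 := by
    rintro v (⟨s, hs, rfl⟩ | ⟨j', rfl⟩) j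
    · exact ⟨⟨a n w C s j, rfl⟩, abs_A_le s j⟩
    · by_cases hjj : j = j'
      · subst hjj; refine ⟨⟨1, by simp⟩, by simp⟩
      · refine ⟨⟨0, by simp [Pi.single_apply, Ne.symm hjj]⟩, by simp [Pi.single_apply, Ne.symm hjj]⟩
  set M : Matrix (Fin (n+1)) (Fin (n+1)) ℝ := Matrix.of (fun i j => rows i j) with hM
  set Mz : Matrix (Fin (n+1)) (Fin (n+1)) ℤ := Matrix.of (fun i j => round (rows i j)) with hMz
  have hMzc : Mz.map (Int.cast : ℤ → ℝ) = M := by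
    ext i j
    obtain ⟨⟨z, hz⟩, -⟩ := hUentry _ (hrowsU i) j
    simp [hM, hMz, Matrix.map_apply, hz]
  have hdet : IsUnit M.det := by
    have h0 := (Pi.basisFun ℝ (Fin (n+1))).isUnit_det (bas.reindex e)
    rw [Basis.det_apply] at h0
    have h2 : (Pi.basisFun ℝ (Fin (n+1))).toMatrix (⇑(bas.reindex e)) = M.transpose := by
      ext i j
      rw [Basis.toMatrix_apply, hrows_eq]
      simp [hM]
    rw [h2, Matrix.det_transpose] at h0
    exact h0
  set cf : (Fin (n+1) → ℝ) → ℤ :=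
    fun v => if h : ∃ s ∈ T, A n w C s = v then b n w C h.choose else 0 with hcf
  have hcf_eq : ∀ v, ∀ s ∈ T, A n w C s = v → (b n w C s : ℝ) = (cf v : ℝ) := by
    intro v s hs hv
    have hex : ∃ s ∈ T, A n w C s = v := ⟨s, hs, hv⟩
    rw [hcf]
    dsimp only
    rw [dif_pos hex]
    obtain ⟨hs₀T, hs₀v⟩ := hex.choose_spec
    have e1 : (b n w C s : ℝ) = dot n v x₀ := by rw [← hv]; exact (hs).symm
    have e2 : (b n w C hex.choose : ℝ) = dot n (A n w C hex.choose) x₀ := (hs₀T).symm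
    rw [hs₀v] at e2
    rw [e1]
    linarith [e2]
  have hcf_bound : ∀ v, |(cf v : ℝ)| ≤ 1 := by
    intro v
    rw [hcf]
    dsimp only
    split
    · exact abs_b_le_one _
    · simp
  set c : Fin (n+1) → ℝ := fun i => (cf (rows i) : ℝ) with hc
  set x₁ := M⁻¹ *ᵥ c with hx₁
  have hMx₁ : M *ᵥ x₁ = c := by
    rw [hx₁, Matrix.mulVec_mulVec, Matrix.mul_nonsing_inv _ hdet, Matrix.one_mulVec]
  have hrow_dot : ∀ i, dot n (rows i) x₁ = c i := by
    intro i
    have h3 := congrFun hMx₁ i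
    rw [Matrix.mulVec] at h3
    exact h3
  have hTeq : ∀ s, dot n (A n w C s) x₀ = b n w C s → dot n (A n w C s) x₁ = b n w C s := by
    intro s hs
    have hker : Submodule.span ℝ B ≤ LinearMap.ker (L (x₁ - x₀)) := by
      rw [Submodule.span_le]
      intro v hvB
      simp only [SetLike.mem_coe, LinearMap.mem_ker]
      rw [L_apply, dot_sub]
      obtain ⟨i, hi⟩ := hrowsB v hvB
      obtain ⟨s', hs'T, hs'v⟩ := hBsub hvB
      have e1 : dot n v x₁ = (cf v : ℝ) := by
        rw [← hi, hrow_dot i]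
      have e2 : dot n v x₀ = (cf v : ℝ) := by
        have hh := hcf_eq v s' hs'T hs'v
        have h2 : dot n v x₀ = (b n w C s' : ℝ) := by rw [← hs'v]; exact hs'T
        rw [h2, hh]
      rw [e1, e2, sub_self]
    have hmem : A n w C s ∈ Submodule.span ℝ B := by
      rw [hBspan]
      exact Submodule.subset_span ⟨s, hs, rfl⟩
    have h0 : L (x₁ - x₀) (A n w C s) = 0 := hker hmem
    rw [L_apply, dot_sub] at h0
    rw [hs] at h0
    linarith
  have hx₁Q : x₁ ∈ Q n w C := keyB hx₀Q hx₀max x₁ hTeq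
  set y0 : Fin (n+1) → ℤ := Mz.adjugate *ᵥ (fun i => cf (rows i)) with hy0
  have hdetz : ((Mz.det : ℤ) : ℝ) = M.det := by
    rw [← hMzc]
    exact (RingHom.map_det (Int.castRingHom ℝ) Mz)
  have hdz_ne : Mz.det ≠ 0 := by
    intro h
    apply hdet.ne_zero
    rw [← hdetz, h, Int.cast_zero]
  have hadjc : Mz.adjugate.map (Int.cast : ℤ → ℝ) = M.adjugate := by
    rw [← hMzc]
    have hh := (Int.castRingHom ℝ).map_adjugate Mz
    simp only [RingHom.mapMatrix_apply, Int.coe_castRingHom] at hh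
    rw [← hh]
  have hy0c : ∀ j, (y0 j : ℝ) = ((Mz.det : ℤ) : ℝ) * x₁ j := by
    intro j
    have h1 : (y0 j : ℝ) = ((Mz.adjugate.map (Int.cast : ℤ → ℝ)) *ᵥ c) j := by
      rw [hy0]
      simp only [Matrix.mulVec, dotProduct, Matrix.map_apply, hc]
      push_cast
      rfl
    rw [h1, hadjc, ← hMx₁, Matrix.mulVec_mulVec, Matrix.adjugate_mul, Matrix.smul_mulVec,
      Matrix.one_mulVec, hdetz]
    rfl
  set y : Fin (n+1) → ℤ := if 0 ≤ Mz.det then y0 else -y0 with hy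
  have hyr : (fun j => (y j : ℝ)) = (((|Mz.det| : ℤ) : ℝ) • x₁) := by
    funext j
    rw [hy]
    split_ifs with h
    · rw [abs_of_nonneg h, Pi.smul_apply, smul_eq_mul]
      exact hy0c j
    · rw [abs_of_neg (lt_of_not_ge h), Pi.smul_apply, smul_eq_mul]
      simp only [Pi.neg_apply]
      simp only [Int.cast_neg]
      rw [hy0c j]
      ring
  have hyQ : (fun j => (y j : ℝ)) ∈ Q n w C := by
    rw [hyr]
    apply smul_mem_Q hx₁Q
    have h5 : (1:ℤ) ≤ |Mz.det| := Int.one_le_abs hdz_ne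
    exact_mod_cast h5
  refine ⟨y, hyQ, ?_⟩
  intro j
  have hadj : ∀ i j, |((Mz.adjugate i j : ℤ) : ℝ)| ≤ Real.sqrt ((n:ℝ)+1) ^ (n+1) := by
    intro i j
    have h6 : ((Mz.adjugate i j : ℤ) : ℝ) = M.adjugate i j := by
      rw [← hadjc]; simp [Matrix.map_apply]
    rw [h6, Matrix.adjugate_apply]
    have hent : ∀ k l, |(M.updateRow j (Pi.single i 1)) k l| ≤ 1 := by
      intro k l
      rw [Matrix.updateRow_apply]
      split_ifs with hk
      · by_cases hli : l = i <;> simp [Pi.single_apply, hli]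
      · exact (hUentry _ (hrowsU k) l).2
    have h7 := hadamard_det (M.updateRow j (Pi.single i 1)) hent
    have h8 : ((n+1 : ℕ) : ℝ) = (n:ℝ)+1 := by push_cast; ring
    rw [h8] at h7
    exact h7
  have hyj : |(y j:ℝ)| = |(y0 j : ℝ)| := by
    rw [hy]
    split_ifs <;> simp
  rw [hyj]
  have h9 : (y0 j : ℝ) = ∑ i, ((Mz.adjugate j i : ℤ):ℝ) * ((cf (rows i) : ℤ):ℝ) := by
    rw [hy0]
    simp only [Matrix.mulVec, dotProduct]
    push_cast
    rfl
  rw [h9]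
  calc |∑ i, ((Mz.adjugate j i : ℤ):ℝ) * ((cf (rows i) : ℤ):ℝ)|
      ≤ ∑ i, |((Mz.adjugate j i : ℤ):ℝ) * ((cf (rows i) : ℤ):ℝ)| := Finset.abs_sum_le_sum_abs _ _
    _ ≤ ∑ _i : Fin (n+1), Real.sqrt ((n:ℝ)+1) ^ (n+1) * 1 := by
        apply Finset.sum_le_sum
        intro i _
        rw [abs_mul]
        exact mul_le_mul (hadj j i) (hcf_bound _) (abs_nonneg _)
          (le_trans (abs_nonneg _) (hadj j i))
    _ = ((n:ℝ)+1) * Real.sqrt ((n:ℝ)+1) ^ (n+1) := by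
        rw [Finset.sum_const, mul_one]
        simp only [Finset.card_univ, Fintype.card_fin, nsmul_eq_mul]
        push_cast
        ring

lemma threshold_int' (n : ℕ) (w : Fin n → ℝ) (C : ℝ) :
    ∃ (w' : Fin n → ℤ) (C' : ℤ),
      ((∑ i, |(w' i : ℝ)|) + |(C' : ℝ)| ≤ ((n:ℝ)+1)^2 * Real.sqrt ((n:ℝ)+1) ^ (n+1)) ∧
      ∀ s : Finset (Fin n), (∑ i ∈ s, w i ≤ C ↔ (∑ i ∈ s, (w' i : ℝ)) ≤ (C' : ℝ)) := by
  obtain ⟨y, hyQ, hybound⟩ := exists_int_point (n := n) (w := w) (C := C)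
  refine ⟨fun i => y i.castSucc, y (Fin.last n), ?_, ?_⟩
  · have h0 : (∑ i : Fin n, |(y i.castSucc : ℝ)|) + |(y (Fin.last n) : ℝ)|
        = ∑ j : Fin (n+1), |(y j : ℝ)| := (Fin.sum_univ_castSucc (fun j => |(y j:ℝ)|)).symm
    rw [h0]
    calc ∑ j : Fin (n+1), |(y j:ℝ)|
        ≤ ∑ _j : Fin (n+1), ((n:ℝ)+1) * Real.sqrt ((n:ℝ)+1)^(n+1) :=
          Finset.sum_le_sum fun j _ => hybound j
      _ = ((n:ℝ)+1)^2 * Real.sqrt ((n:ℝ)+1)^(n+1) := by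
          rw [Finset.sum_const]
          simp only [Finset.card_univ, Fintype.card_fin, nsmul_eq_mul]
          push_cast
          ring
  · intro s
    have h := hyQ s
    rw [dot_A] at h
    by_cases hs : ∑ i ∈ s, w i ≤ C
    · rw [if_pos hs] at h
      unfold b at h
      rw [if_pos hs] at h
      push_cast at h
      constructor
      · intro _
        nlinarith [h]
      · intro _
        exact hs
    · rw [if_neg hs] at h
      unfold b at h
      rw [if_neg hs] at h
      push_cast at h
      constructor
      · intro h2
        exact absurd h2 hs
      · intro h2
        exfalso
        nlinarith [h, h2]

end
end KnapsackAux

theorem knapsack_equivalent_instance (n : ℕ) (wts pr : Fin n → ℝ) (C T : ℝ) :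
    ∃ (wts' pr' : Fin n → ℤ) (C' T' : ℤ),
      ((∑ i, |(wts' i : ℝ)|) + (∑ i, |(pr' i : ℝ)|) + |(C' : ℝ)| + |(T' : ℝ)|
        ≤ 2 * ((n + 2 : ℝ) ^ 2 * (2 * Real.sqrt (n + 2)) ^ (n + 1))) ∧
      ∀ s : Finset (Fin n),
        ((∑ i ∈ s, wts i ≤ C ∧ T ≤ ∑ i ∈ s, pr i) ↔
         ((∑ i ∈ s, (wts' i : ℝ)) ≤ (C' : ℝ) ∧ (T' : ℝ) ≤ ∑ i ∈ s, (pr' i : ℝ))) := by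
  classical
  obtain ⟨w1, C1, hb1, hiff1⟩ := KnapsackAux.threshold_int' n wts C
  obtain ⟨w2, T2, hb2, hiff2⟩ := KnapsackAux.threshold_int' n (fun i => -pr i) (-T)
  refine ⟨w1, fun i => -(w2 i), C1, -T2, ?_, ?_⟩
  · have e1 : ∀ i : Fin n, |((-(w2 i) : ℤ) : ℝ)| = |(w2 i : ℝ)| := by
      intro i; push_cast; rw [abs_neg]
    have e2 : |((-T2 : ℤ) : ℝ)| = |(T2 : ℝ)| := by push_cast; rw [abs_neg]
    rw [Finset.sum_congr rfl (fun i _ => e1 i), e2]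
    have key : ((n:ℝ)+1)^2 * Real.sqrt ((n:ℝ)+1) ^ (n+1)
        ≤ ((n:ℝ) + 2) ^ 2 * (2 * Real.sqrt ((n:ℝ) + 2)) ^ (n + 1) := by
      have k1 : ((n:ℝ)+1)^2 ≤ ((n:ℝ)+2)^2 := by nlinarith [Nat.cast_nonneg (α := ℝ) n]
      have k2 : Real.sqrt ((n:ℝ)+1) ≤ 2 * Real.sqrt ((n:ℝ)+2) := by
        have s1 : Real.sqrt ((n:ℝ)+1) ≤ Real.sqrt ((n:ℝ)+2) := Real.sqrt_le_sqrt (by linarith)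
        have s2 : 0 ≤ Real.sqrt ((n:ℝ)+2) := Real.sqrt_nonneg _
        linarith
      have k3 : Real.sqrt ((n:ℝ)+1) ^ (n+1) ≤ (2 * Real.sqrt ((n:ℝ)+2)) ^ (n+1) :=
        pow_le_pow_left₀ (Real.sqrt_nonneg _) k2 _
      have k4 : (0:ℝ) ≤ Real.sqrt ((n:ℝ)+1) ^ (n+1) := pow_nonneg (Real.sqrt_nonneg _) _
      have k5 : (0:ℝ) ≤ ((n:ℝ)+1)^2 := by positivity
      nlinarith
    linarith [hb1, hb2, key]
  · intro s
    have h1 := hiff1 s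
    have h2 := hiff2 s
    have hsum : ∑ i ∈ s, -pr i = -∑ i ∈ s, pr i := by
      rw [← Finset.sum_neg_distrib]
    constructor
    · rintro ⟨ha, hb⟩
      refine ⟨h1.mp ha, ?_⟩
      have h3 : ∑ i ∈ s, -pr i ≤ -T := by rw [hsum]; linarith
      have h4 := h2.mp h3
      have h5 : ∑ i ∈ s, ((-(w2 i) : ℤ) : ℝ) = -∑ i ∈ s, (w2 i : ℝ) := by
        push_cast
        rw [← Finset.sum_neg_distrib]
      rw [h5]
      push_cast
      linarith
    · rintro ⟨ha, hb⟩
      refine ⟨h1.mpr ha, ?_⟩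
      have h5 : ∑ i ∈ s, ((-(w2 i) : ℤ) : ℝ) = -∑ i ∈ s, (w2 i : ℝ) := by
        push_cast
        rw [← Finset.sum_neg_distrib]
      rw [h5] at hb
      push_cast at hb
      have h4 : (∑ i ∈ s, (w2 i : ℝ)) ≤ (T2 : ℝ) := by linarith
      have h3 := h2.mpr h4
      rw [hsum] at h3
      linarith
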